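/- arXiv:1502.01580 — 4 statements merged into one kernel-verified Lean document; each statement's English description precedes it below -/
import Mathlib

section
/- Let G be a connected finite simple graph with vertex set V(G) = {v_1, …, v_n} and let μ(G) be the Mycielskian of G. Then for all 1 ≤ i, j ≤ n with i ≠ j, the distance in μ(G) satisfies d_{μ(G)}(v_i, x_j) = min(d_G(v_i, v_j), 3); that is, d_{μ(G)}(v_i, x_j) = d_G(v_i, v_j) whenever d_G(v_i, v_j) ≤ 2, and d_{μ(G)}(v_i, x_j) = 3 whenever d_G(v_i, v_j) ≥ 3. -/
open SimpleGraph Finset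

/-- The Mycielskian of a simple graph `G`. Vertices: `some (Sum.inl a)` are the original
vertices `v_a`, `some (Sum.inr a)` are the copies `x_a`, and `none` is the extra vertex `x`. -/
def mycielskian {V : Type*} (G : SimpleGraph V) : SimpleGraph (Option (V ⊕ V)) where
  Adj u v := match u, v with
    | some (Sum.inl a), some (Sum.inl b) => G.Adj a b
    | some (Sum.inl a), some (Sum.inr b) => G.Adj a b
    | some (Sum.inr a), some (Sum.inl b) => G.Adj a b
    | some (Sum.inr _), none => True
    | none, some (Sum.inr _) => True
    | _, _ => False
  symm := by
    constructor
    rintro (_ | (a | a)) (_ | (b | b)) h <;> first | exact h.symm | exact h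
  loopless := by
    constructor
    rintro (_ | (a | a)) h
    · exact h
    · exact G.loopless.irrefl a h
    · exact h

instance mycielskian.adjDecidable {V : Type*} (G : SimpleGraph V) [DecidableRel G.Adj] :
    DecidableRel (mycielskian G).Adj := fun u v =>
  match u, v with
  | some (Sum.inl a), some (Sum.inl b) => inferInstanceAs (Decidable (G.Adj a b))
  | some (Sum.inl a), some (Sum.inr b) => inferInstanceAs (Decidable (G.Adj a b))
  | some (Sum.inr a), some (Sum.inl b) => inferInstanceAs (Decidable (G.Adj a b))
  | some (Sum.inr _), none => inferInstanceAs (Decidable True)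
  | none, some (Sum.inr _) => inferInstanceAs (Decidable True)
  | none, none => inferInstanceAs (Decidable False)
  | none, some (Sum.inl _) => inferInstanceAs (Decidable False)
  | some (Sum.inl _), none => inferInstanceAs (Decidable False)
  | some (Sum.inr _), some (Sum.inr _) => inferInstanceAs (Decidable False)


def toMyc {V : Type*} (G : SimpleGraph V) : G →g mycielskian G where
  toFun v := some (Sum.inl v)
  map_rel' := fun h => h

/-- Lift a walk `b → a` in `G` to a walk `x_b → v_a` in the Mycielskian. -/
lemma exists_myc_walk {V : Type*} (G : SimpleGraph V) {a b : V} (p : G.Walk b a)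
    (hp : 0 < p.length) :
    ∃ q : (mycielskian G).Walk (some (Sum.inr b)) (some (Sum.inl a)),
      q.length = p.length := by
  cases p with
  | nil => simp at hp
  | @cons _ c _ h q =>
    refine ⟨SimpleGraph.Walk.cons
      (show (mycielskian G).Adj (some (Sum.inr b)) (some (Sum.inl c)) from h)
      (q.map (toMyc G)), ?_⟩
    show (q.map (toMyc G)).length + 1 = q.length + 1
    rw [SimpleGraph.Walk.length_map]

theorem mycielskian_dist_mixed (n : ℕ) (G : SimpleGraph (Fin n)) (hG : G.Connected) :
    ∀ i j : Fin n, i ≠ j →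
      (mycielskian G).dist (some (Sum.inl i)) (some (Sum.inr j)) = min (G.dist i j) 3 := by
  intro i j hij
  set d := G.dist i j with hd
  have hdpos : 0 < d := hG.pos_dist_of_ne hij
  obtain ⟨p, hp⟩ := hG.exists_walk_length_eq_dist i j
  -- upper bound ≤ d
  obtain ⟨q, hq⟩ := exists_myc_walk G p.reverse (by simpa [hp])
  have hub1 : (mycielskian G).dist (some (Sum.inl i)) (some (Sum.inr j)) ≤ d := by
    have := SimpleGraph.dist_le q.reverse
    simpa [hq, hp] using this
  -- upper bound ≤ 3
  have hub2 : (mycielskian G).dist (some (Sum.inl i)) (some (Sum.inr j)) ≤ 3 := by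
    cases p with
    | nil => exact absurd hp.symm (by omega)
    | @cons _ k _ h q' =>
      exact SimpleGraph.dist_le <|
        SimpleGraph.Walk.cons (show (mycielskian G).Adj (some (Sum.inl i)) (some (Sum.inr k)) from h)
          (SimpleGraph.Walk.cons (show (mycielskian G).Adj (some (Sum.inr k)) none from trivial)
            (SimpleGraph.Walk.cons (show (mycielskian G).Adj none (some (Sum.inr j)) from trivial)
              SimpleGraph.Walk.nil))
  have hub : (mycielskian G).dist (some (Sum.inl i)) (some (Sum.inr j)) ≤ min d 3 :=
    le_min hub1 hub2
  set D := (mycielskian G).dist (some (Sum.inl i)) (some (Sum.inr j)) with hD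
  -- lower bound
  have hreach : (mycielskian G).Reachable (some (Sum.inl i)) (some (Sum.inr j)) :=
    ⟨q.reverse⟩
  refine le_antisymm hub ?_
  interval_cases D
  · -- D = 0
    exact absurd (hreach.dist_eq_zero_iff.mp hD.symm) (by simp)
  · -- D = 1
    have hadj : (mycielskian G).Adj (some (Sum.inl i)) (some (Sum.inr j)) :=
      SimpleGraph.dist_eq_one_iff_adj.mp hD.symm
    have : G.Adj i j := hadj
    have : d = 1 := SimpleGraph.dist_eq_one_iff_adj.mpr this
    omega
  · -- D = 2
    obtain ⟨w, hw⟩ := hreach.exists_walk_length_eq_dist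
    rw [← hD] at hw
    cases w with
    | @cons _ m _ h1 w' =>
      cases w' with
      | nil => simp at hw
      | @cons _ m2 _ h2 w'' =>
        have hlen : w''.length = 0 := by simp only [SimpleGraph.Walk.length_cons] at hw; omega
        have := SimpleGraph.Walk.eq_of_length_eq_zero hlen
        subst this
        match m with
        | none => exact absurd h1 (by simp [mycielskian])
        | some (Sum.inr k) => exact absurd h2 (by simp [mycielskian])
        | some (Sum.inl k) =>
          have hik : G.Adj i k := h1
          have hkj : G.Adj k j := h2
          have : d ≤ 2 := by
            have := SimpleGraph.dist_le (SimpleGraph.Walk.cons hik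
              (SimpleGraph.Walk.cons hkj SimpleGraph.Walk.nil))
            simpa using this
          omega
  · -- D = 3
    omega
end

section
/- Let G be a finite simple graph with at least one vertex, let μ(G) be the Mycielskian of G, and let μ̄ denote the complement of μ(G). Then μ̄ is connected and its diameter is exactly 2. -/
open SimpleGraph Finset

theorem mycielskian_compl_connected_diam_two {V : Type*} [Fintype V] [Nonempty V]
    (G : SimpleGraph V) :
    (mycielskian G)ᶜ.Connected ∧ (mycielskian G)ᶜ.diam = 2 := by

  classical
  set H := (mycielskian G)ᶜ with hH
  -- basic adjacency facts in the complement
  have hadj : ∀ u v : Option (V ⊕ V), u ≠ v → ¬ (mycielskian G).Adj u v → H.Adj u v :=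
    fun u v h1 h2 => (SimpleGraph.compl_adj _ _ _).mpr ⟨h1, h2⟩
  have hNL : ∀ b : V, H.Adj none (some (Sum.inl b)) := by
    intro b
    exact hadj _ _ (by simp) (by simp [mycielskian])
  have hLR : ∀ a b : V, ¬ G.Adj a b → H.Adj (some (Sum.inl a)) (some (Sum.inr b)) := by
    intro a b hab
    exact hadj _ _ (by simp) (by simpa [mycielskian] using hab)
  have hLL : ∀ a b : V, a ≠ b → ¬ G.Adj a b → H.Adj (some (Sum.inl a)) (some (Sum.inl b)) := by
    intro a b hne hab
    exact hadj _ _ (by simp [hne]) (by simpa [mycielskian] using hab)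
  have hRR : ∀ a b : V, a ≠ b → H.Adj (some (Sum.inr a)) (some (Sum.inr b)) := by
    intro a b hne
    exact hadj _ _ (by simp [hne]) (by simp [mycielskian])
  -- every pair is at edist at most 2
  have key : ∀ u v : Option (V ⊕ V), H.edist u v ≤ 2 := by
    have two : ∀ {u v w : Option (V ⊕ V)}, H.Adj u w → H.Adj w v → H.edist u v ≤ 2 := by
      intro u v w h1 h2
      have := SimpleGraph.edist_le (SimpleGraph.Walk.cons h1 (SimpleGraph.Walk.cons h2 SimpleGraph.Walk.nil))
      simpa using this
    have one : ∀ {u v : Option (V ⊕ V)}, H.Adj u v → H.edist u v ≤ 2 := by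
      intro u v h
      have := SimpleGraph.edist_le h.toWalk
      simp only [SimpleGraph.Walk.length_cons, SimpleGraph.Walk.length_nil] at this
      exact this.trans (by norm_num)
    rintro (_ | (a | a)) (_ | (b | b))
    · simp [SimpleGraph.edist_self]
    · exact one (hNL b)
    · exact two (hNL b) (hLR b b (G.loopless.irrefl b))
    · exact one (hNL a).symm
    · by_cases hab : a = b
      · subst hab; simp [SimpleGraph.edist_self]
      · by_cases hG : G.Adj a b
        · exact two (hNL a).symm (hNL b)
        · exact one (hLL a b hab hG)
    · by_cases hG : G.Adj a b
      · exact two (hLR a a (G.loopless.irrefl a)) (hRR a b hG.ne)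
      · exact one (hLR a b hG)
    · exact two (hLR a a (G.loopless.irrefl a)).symm (hNL a).symm
    · by_cases hG : G.Adj b a
      · exact two (hRR a b (fun h => hG.ne h.symm)) (hLR b b (G.loopless.irrefl b)).symm
      · exact one (hLR b a hG).symm
    · by_cases hab : a = b
      · subst hab; simp [SimpleGraph.edist_self]
      · exact one (hRR a b hab)
  have hconn : H.Connected := by
    refine ⟨fun u v => ?_⟩
    have hk := key u v
    rw [← SimpleGraph.edist_ne_top_iff_reachable]
    intro htop
    rw [htop] at hk
    exact absurd hk (by simp)
  refine ⟨hconn, ?_⟩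
  -- ediam = 2
  obtain ⟨a⟩ := ‹Nonempty V›
  have hnotadj : ¬ H.Adj none (some (Sum.inr a)) := by
    intro h
    exact ((SimpleGraph.compl_adj _ _ _).mp h).2 (by simp [mycielskian])
  have hlow : (2 : ℕ∞) ≤ H.edist none (some (Sum.inr a)) := by
    have h0 : 0 < H.edist none (some (Sum.inr a)) :=
      SimpleGraph.edist_pos_of_ne (by simp)
    have h1 : H.edist none (some (Sum.inr a)) ≠ 1 := by
      intro h
      exact hnotadj (SimpleGraph.edist_eq_one_iff_adj.mp h)
    have : (1 : ℕ∞) < H.edist none (some (Sum.inr a)) :=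
      lt_of_le_of_ne (Order.one_le_iff_pos.mpr h0) (Ne.symm h1)
    exact Order.add_one_le_of_lt this
  have hediam : H.ediam = 2 := by
    refine le_antisymm (SimpleGraph.ediam_le_of_edist_le fun u v => key u v) ?_
    exact hlow.trans SimpleGraph.edist_le_ediam
  simp [SimpleGraph.diam, hediam]
end

section
/- Let G be a connected finite simple graph with vertex set V(G) = {v_1, …, v_n} whose diameter is 2, and let μ(G) be the Mycielskian of G. Then ∑_{(i,j) : 1 ≤ i, j ≤ n, i ≠ j} d_{μ(G)}(v_i, x_j)·deg_G(v_i) = DD(G), where the sum runs over all ordered pairs of distinct indices (i, j). -/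
open SimpleGraph Finset

/-- The first Zagreb index `M₁(G) = ∑ v (deg v)²`, as a rational number. -/
def zagreb1 {V : Type*} [Fintype V] (G : SimpleGraph V) [DecidableRel G.Adj] : ℚ :=
  ∑ v, (G.degree v : ℚ) ^ 2

/-- The second Zagreb index `M₂(G) = ∑_{uv ∈ E(G)} deg u · deg v`, as a rational number. -/
def zagreb2 {V : Type*} [Fintype V] (G : SimpleGraph V) [DecidableRel G.Adj] : ℚ :=
  ∑ e ∈ G.edgeFinset,
    Sym2.lift ⟨fun u v => (G.degree u : ℚ) * (G.degree v : ℚ), fun u v => by ring⟩ e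

/-- The Gutman index `Gut(H) = ∑_{{u,v} ⊆ V(H), u ≠ v} d(u,v)·deg u·deg v`, the sum running
over unordered pairs of distinct vertices (realized as half the sum over ordered pairs). -/
noncomputable def gutmanIndex {V : Type*} [Fintype V] [DecidableEq V] (H : SimpleGraph V)
    [DecidableRel H.Adj] : ℚ :=
  (∑ u, ∑ v, if u = v then 0 else (H.dist u v : ℚ) * H.degree u * H.degree v) / 2

/-- The degree distance `DD(G) = ∑_{{u,v} ⊆ V(G), u ≠ v} d(u,v)·(deg u + deg v)`, the sum
running over unordered pairs of distinct vertices (realized as half the ordered sum). -/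
noncomputable def degreeDistance {V : Type*} [Fintype V] [DecidableEq V] (H : SimpleGraph V)
    [DecidableRel H.Adj] : ℚ :=
  (∑ u, ∑ v, if u = v then 0 else (H.dist u v : ℚ) * (H.degree u + H.degree v)) / 2

lemma myc_dist {n : ℕ} (G : SimpleGraph (Fin n)) [DecidableRel G.Adj]
    (hconn : G.Connected) (hdiam : G.diam = 2) {i j : Fin n} (hij : i ≠ j) :
    (mycielskian G).dist (some (Sum.inl i)) (some (Sum.inr j)) = G.dist i j := by
  have hne : G.ediam ≠ ⊤ := SimpleGraph.ediam_ne_top_of_diam_ne_zero (by omega)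
  have hd2 : G.dist i j ≤ 2 := hdiam ▸ SimpleGraph.dist_le_diam hne
  have hd0 : G.dist i j ≠ 0 := by
    rw [SimpleGraph.dist_ne_zero_iff_ne_and_reachable]
    exact ⟨hij, hconn i j⟩
  have hcases : G.dist i j = 1 ∨ G.dist i j = 2 := by omega
  rcases hcases with h | h
  · rw [h]
    have hadj : G.Adj i j := SimpleGraph.dist_eq_one_iff_adj.mp h
    exact SimpleGraph.dist_eq_one_iff_adj.mpr hadj
  · rw [h]
    obtain ⟨p, hp⟩ := (hconn i j).exists_walk_length_eq_dist
    rw [h] at hp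
    cases p with
    | nil => simp at hp
    | cons h1 q =>
      rename_i k
      cases q with
      | nil => simp at hp
      | cons h2 r =>
        cases r with
        | cons h3 s => simp [SimpleGraph.Walk.length_cons] at hp
        | nil =>
          have m1 : (mycielskian G).Adj (some (Sum.inl i)) (some (Sum.inl k)) := h1
          have m2 : (mycielskian G).Adj (some (Sum.inl k)) (some (Sum.inr j)) := h2
          have hle := SimpleGraph.dist_le
            (SimpleGraph.Walk.cons m1 (SimpleGraph.Walk.cons m2 SimpleGraph.Walk.nil))
          simp only [SimpleGraph.Walk.length_cons, SimpleGraph.Walk.length_nil] at hle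
          have h0 : (mycielskian G).dist (some (Sum.inl i)) (some (Sum.inr j)) ≠ 0 := by
            rw [SimpleGraph.dist_ne_zero_iff_ne_and_reachable]
            exact ⟨by simp, ⟨SimpleGraph.Walk.cons m1
              (SimpleGraph.Walk.cons m2 SimpleGraph.Walk.nil)⟩⟩
          have h1' : (mycielskian G).dist (some (Sum.inl i)) (some (Sum.inr j)) ≠ 1 := by
            intro hone
            have hadj : (mycielskian G).Adj (some (Sum.inl i)) (some (Sum.inr j)) :=
              SimpleGraph.dist_eq_one_iff_adj.mp hone
            have : G.Adj i j := hadj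
            have := SimpleGraph.dist_eq_one_iff_adj.mpr this
            omega
          omega

theorem sum_dist_mixed_deg (n : ℕ) (G : SimpleGraph (Fin n)) [DecidableRel G.Adj]
    (hconn : G.Connected) (hdiam : G.diam = 2) :
    ∑ p ∈ Finset.univ.offDiag,
        ((mycielskian G).dist (some (Sum.inl p.1)) (some (Sum.inr p.2)) : ℚ)
          * G.degree p.1
      = degreeDistance G := by
  have key : ∑ p ∈ Finset.univ.offDiag,
      ((mycielskian G).dist (some (Sum.inl p.1)) (some (Sum.inr p.2)) : ℚ) * G.degree p.1
      = ∑ p ∈ Finset.univ.offDiag, (G.dist p.1 p.2 : ℚ) * G.degree p.1 := by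
    apply Finset.sum_congr rfl
    rintro ⟨a, b⟩ hab
    rw [Finset.mem_offDiag] at hab
    rw [myc_dist G hconn hdiam hab.2.2]
  rw [key, degreeDistance]
  have hoff : ∀ (f : Fin n × Fin n → ℚ), ∑ p ∈ Finset.univ.offDiag, f p
      = ∑ u, ∑ v, if u = v then 0 else f (u, v) := by
    intro f
    rw [show Finset.univ.offDiag = (Finset.univ ×ˢ Finset.univ).filter
        (fun a : Fin n × Fin n => a.1 ≠ a.2) from by ext x; simp [Finset.mem_offDiag],
      Finset.sum_filter, ← Finset.sum_product']
    apply Finset.sum_congr rfl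
    rintro ⟨a, b⟩ _
    by_cases h : a = b <;> simp [h]
  rw [hoff]
  have swap : ∑ u, ∑ v, (if u = v then 0 else (G.dist u v : ℚ) * G.degree v)
      = ∑ u, ∑ v, (if u = v then 0 else (G.dist u v : ℚ) * G.degree u) := by
    rw [Finset.sum_comm]
    apply Finset.sum_congr rfl; intro u _
    apply Finset.sum_congr rfl; intro v _
    rw [SimpleGraph.dist_comm]
    rcases eq_or_ne u v with h | h
    · simp [h]
    · simp [h, h.symm]
  rw [eq_div_iff (by norm_num : (2:ℚ) ≠ 0)]
  have expand : ∑ u, ∑ v, (if u = v then 0 else (G.dist u v : ℚ) * (G.degree u + G.degree v))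
      = (∑ u, ∑ v, (if u = v then 0 else (G.dist u v : ℚ) * G.degree u))
        + ∑ u, ∑ v, (if u = v then 0 else (G.dist u v : ℚ) * G.degree v) := by
    rw [← Finset.sum_add_distrib]
    apply Finset.sum_congr rfl; intro u _
    rw [← Finset.sum_add_distrib]
    apply Finset.sum_congr rfl; intro v _
    by_cases h : u = v <;> simp [h] <;> ring
  rw [expand, swap]; ring
end

section
/- Let G be a connected finite simple graph with vertex set V(G) = {v_1, …, v_n} whose diameter is 2, and let μ(G) be the Mycielskian of G. Then ∑_{(i,j) : 1 ≤ i, j ≤ n, i ≠ j} d_{μ(G)}(v_i, x_j)·deg_G(v_i)·deg_G(v_j) = 2·Gut(G), where the sum runs over all ordered pairs of distinct indices (i, j). -/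
open SimpleGraph Finset

lemma mycielskian_dist_inl_inr (n : ℕ) (G : SimpleGraph (Fin n)) [DecidableRel G.Adj]
    (hconn : G.Connected) (hdiam : G.diam = 2) {i j : Fin n} (hij : i ≠ j) :
    (mycielskian G).dist (some (Sum.inl i)) (some (Sum.inr j)) = G.dist i j := by
  have hne_top : G.ediam ≠ ⊤ := SimpleGraph.ediam_ne_top_of_diam_ne_zero (by rw [hdiam]; norm_num)
  have hle : G.dist i j ≤ 2 := hdiam ▸ SimpleGraph.dist_le_diam hne_top
  have hpos : 0 < G.dist i j := hconn.pos_dist_of_ne hij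
  interval_cases h : G.dist i j
  · -- dist = 1, adjacent
    have hadj : G.Adj i j := SimpleGraph.dist_eq_one_iff_adj.mp h
    have : (mycielskian G).Adj (some (Sum.inl i)) (some (Sum.inr j)) := hadj
    exact SimpleGraph.dist_eq_one_iff_adj.mpr this
  · -- dist = 2
    obtain ⟨p, hp⟩ := (hconn i j).exists_walk_length_eq_dist
    rw [h] at hp
    have h01 : G.Adj (p.getVert 0) (p.getVert 1) := p.adj_getVert_succ (by omega)
    have h12 : G.Adj (p.getVert 1) (p.getVert 2) := p.adj_getVert_succ (by omega)
    rw [p.getVert_zero] at h01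
    have h2 : p.getVert 2 = j := by rw [← hp]; exact p.getVert_length
    rw [h2] at h12
    set k := p.getVert 1
    have e1 : (mycielskian G).Adj (some (Sum.inl i)) (some (Sum.inl k)) := h01
    have e2 : (mycielskian G).Adj (some (Sum.inl k)) (some (Sum.inr j)) := h12
    let w : (mycielskian G).Walk (some (Sum.inl i)) (some (Sum.inr j)) :=
      SimpleGraph.Walk.cons e1 (SimpleGraph.Walk.cons e2 SimpleGraph.Walk.nil)
    have hub : (mycielskian G).dist (some (Sum.inl i)) (some (Sum.inr j)) ≤ 2 :=
      SimpleGraph.dist_le w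
    have hreach : (mycielskian G).Reachable (some (Sum.inl i)) (some (Sum.inr j)) := ⟨w⟩
    have hne0 : (mycielskian G).dist (some (Sum.inl i)) (some (Sum.inr j)) ≠ 0 := by
      intro h0
      have := hreach.dist_eq_zero_iff.mp h0
      simp at this
    have hne1 : (mycielskian G).dist (some (Sum.inl i)) (some (Sum.inr j)) ≠ 1 := by
      intro h1
      have hadj : (mycielskian G).Adj (some (Sum.inl i)) (some (Sum.inr j)) :=
        SimpleGraph.dist_eq_one_iff_adj.mp h1
      have : G.Adj i j := hadj
      have := SimpleGraph.dist_eq_one_iff_adj.mpr this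
      omega
    omega

theorem sum_dist_mixed_deg_prod (n : ℕ) (G : SimpleGraph (Fin n)) [DecidableRel G.Adj]
    (hconn : G.Connected) (hdiam : G.diam = 2) :
    ∑ p ∈ Finset.univ.offDiag,
        ((mycielskian G).dist (some (Sum.inl p.1)) (some (Sum.inr p.2)) : ℚ)
          * G.degree p.1 * G.degree p.2
      = 2 * gutmanIndex G := by
  have key : ∀ p ∈ Finset.univ.offDiag,
      ((mycielskian G).dist (some (Sum.inl p.1)) (some (Sum.inr p.2)) : ℚ)
        * G.degree p.1 * G.degree p.2
      = (G.dist p.1 p.2 : ℚ) * G.degree p.1 * G.degree p.2 := by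
    intro p hp
    rw [Finset.mem_offDiag] at hp
    rw [mycielskian_dist_inl_inr n G hconn hdiam hp.2.2]
  rw [Finset.sum_congr rfl key]
  rw [gutmanIndex]
  rw [show (Finset.univ : Finset (Fin n)).offDiag = (Finset.univ ×ˢ Finset.univ).filter (fun a => a.1 ≠ a.2) by ext; simp, Finset.sum_filter, Finset.sum_product]
  rw [mul_div_cancel₀ _ (two_ne_zero)]
  apply Finset.sum_congr rfl
  intro u _
  apply Finset.sum_congr rfl
  intro v _
  by_cases h : u = v <;> simp [h]
end
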